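/- Let c ∈ ℂ and let t, z ∈ ℂ with t ∉ (−∞,0]. Define f(z,t) = e^{t} e^{z/t} t^{−c} using the principal branch of t^{−c}. Then z ∂_z² f(z,t) + c ∂_z f(z,t) − f(z,t) = −∂_t [ e^{t} e^{z/t} t^{−c} ]. -/

import Mathlib

open Complex

lemma zf_dz (c t : ℂ) (ht : t ≠ 0) (w : ℂ) :
    HasDerivAt (fun w : ℂ => Complex.exp t * Complex.exp (w / t) * t ^ (-c))
      (Complex.exp t * Complex.exp (w / t) * t ^ (-c) / t) w := by
  have h1 : HasDerivAt (fun w : ℂ => w / t) (1 / t) w := (hasDerivAt_id w).div_const t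
  have h2 : HasDerivAt (fun w : ℂ => Complex.exp (w / t))
      (Complex.exp (w / t) * (1 / t)) w := h1.cexp
  have := (h2.const_mul (Complex.exp t)).mul_const (t ^ (-c))
  refine this.congr_deriv ?_
  ring

/-- the ₀F₁ operator applied in `z` to
`f(z,t) = e^t e^(z/t) t^(-c)` equals `-∂_t [ e^t e^(z/t) t^(-c) ]`. -/
theorem zeroFone_integrand_identity (c : ℂ) (t z : ℂ)
    (ht : t ∈ Complex.slitPlane) :
    z * deriv (deriv (fun w : ℂ =>
          Complex.exp t * Complex.exp (w / t) * t ^ (-c))) z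
      + c * deriv (fun w : ℂ =>
          Complex.exp t * Complex.exp (w / t) * t ^ (-c)) z
      - Complex.exp t * Complex.exp (z / t) * t ^ (-c)
    = -deriv (fun s : ℂ =>
        Complex.exp s * Complex.exp (z / s) * s ^ (-c)) t := by
  have ht0 : t ≠ 0 := Complex.slitPlane_ne_zero ht
  have hd1 : deriv (fun w : ℂ => Complex.exp t * Complex.exp (w / t) * t ^ (-c)) z
      = Complex.exp t * Complex.exp (z / t) * t ^ (-c) / t := (zf_dz c t ht0 z).deriv
  have hd2 : deriv (deriv (fun w : ℂ => Complex.exp t * Complex.exp (w / t) * t ^ (-c))) z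
      = Complex.exp t * Complex.exp (z / t) * t ^ (-c) / t / t := by
    have he : deriv (fun w : ℂ => Complex.exp t * Complex.exp (w / t) * t ^ (-c))
        = fun w => Complex.exp t * Complex.exp (w / t) * t ^ (-c) / t :=
      funext fun w => (zf_dz c t ht0 w).deriv
    rw [he]
    exact ((zf_dz c t ht0 z).div_const t).deriv
  -- t-derivative
  have hA : HasDerivAt (fun s : ℂ => Complex.exp s) (Complex.exp t) t := Complex.hasDerivAt_exp t
  have hinv : HasDerivAt (fun s : ℂ => z / s) (-(z / t ^ 2)) t := by
    simp only [div_eq_mul_inv]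
    simpa using (hasDerivAt_inv ht0).const_mul z
  have hB : HasDerivAt (fun s : ℂ => Complex.exp (z / s))
      (Complex.exp (z / t) * (-(z / t ^ 2))) t := hinv.cexp
  have hC : HasDerivAt (fun s : ℂ => s ^ (-c)) (-(c * t ^ (-c - 1))) t := by
    simpa using (hasDerivAt_id t).cpow_const (c := -c) ht
  have hD := (hA.mul hB).mul hC
  rw [hd2, hd1, HasDerivAt.deriv (f := fun s : ℂ => Complex.exp s * Complex.exp (z / s) * s ^ (-c)) hD, Pi.mul_apply]
  have hpow : t ^ (-c - 1) = t ^ (-c) / t := by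
    rw [Complex.cpow_sub _ _ ht0, Complex.cpow_one]
  rw [hpow]
  field_simp
  ring
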